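/- Let V be a real vector space equipped with two seminorms ‖·‖_H and ‖·‖_V, and let B̄ : V × V × V → ℝ be trilinear with B̄(x,y,z) = −B̄(x,z,y) for all x,y,z ∈ V, and satisfying the bound |B̄(x,y,z)| ≤ K ‖y‖_V √( ‖x‖_H ‖x‖_V ‖z‖_H ‖z‖_V ) for all x,y,z ∈ V and some constant K ∈ (0,∞). Then for all x, y ∈ V: |B̄(x,x,x−y) − B̄(y,y,x−y)| ≤ K ‖x‖_V ‖x−y‖_V ‖x−y‖_H. -/
import Mathlib

/-- For a trilinear form `B̄` on a real vector space carrying two seminorms `‖·‖_H`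
and `‖·‖_V`, antisymmetric in its last two arguments and satisfying
`|B̄(x,y,z)| ≤ K ‖y‖_V √(‖x‖_H ‖x‖_V ‖z‖_H ‖z‖_V)`, one has
`|B̄(x,x,x−y) − B̄(y,y,x−y)| ≤ K ‖x‖_V ‖x−y‖_V ‖x−y‖_H`. -/
theorem trilinear_drift_estimate
    {V : Type*} [AddCommGroup V] [Module ℝ V]
    (nH nV : Seminorm ℝ V)
    (B : V →ₗ[ℝ] V →ₗ[ℝ] V →ₗ[ℝ] ℝ)
    (hanti : ∀ x y z : V, B x y z = - B x z y)
    (K : ℝ) (hK : 0 < K)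
    (hbound : ∀ x y z : V,
      |B x y z| ≤ K * nV y * Real.sqrt (nH x * nV x * nH z * nV z)) :
    ∀ x y : V,
      |B x x (x - y) - B y y (x - y)| ≤ K * nV x * nV (x - y) * nH (x - y) := by
  intro x y
  set d := x - y with hd
  have hzero : ∀ a b : V, B a b b = 0 := by
    intro a b
    have := hanti a b b
    linarith
  have hyd : y = x - d := by simp [hd]
  have key : B x x d - B y y d = B d x d := by
    rw [hyd]
    simp only [map_sub, LinearMap.sub_apply, hzero]
    ring
  rw [key]
  have h0H : (0:ℝ) ≤ nH d := apply_nonneg _ _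
  have h0V : (0:ℝ) ≤ nV d := apply_nonneg _ _
  calc |B d x d| ≤ K * nV x * Real.sqrt (nH d * nV d * nH d * nV d) := hbound d x d
    _ = K * nV x * (nH d * nV d) := by
        rw [show nH d * nV d * nH d * nV d = (nH d * nV d) * (nH d * nV d) by ring,
          Real.sqrt_mul_self (by positivity)]
    _ = K * nV x * nV d * nH d := by ring
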